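/- Let g(p,q) be a Taylor–Fourier polynomial in n action variables p and n angle variables q, homogeneous of degree ℓ in p, and let χ(q) = X(q) + ξ·q where X is a trigonometric polynomial in q and ξ ∈ ℝⁿ. Then for every j with 1 ≤ j ≤ ℓ, the j-th term of the Lie series satisfies ‖(1/j!) L_χ^j g‖ ≤ C(ℓ,j) (max_i ‖∂X/∂q_i‖ + max_i |ξ_i|)^j ‖g‖, where C(ℓ,j) is the binomial coefficient, L_χ denotes the Poisson-bracket Lie derivative {·, χ}, and ‖·‖ is the ℓ¹-norm on Taylor–Fourier coefficients. Moreover L_χ^j g = 0 for j > ℓ. -/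

import Mathlib

/- Taylor–Fourier polynomials in n action variables p and n angle variables q:
   finitely supported real coefficients indexed by (power of p, Fourier harmonic k, cos/sin). -/
abbrev TFIdx (n : ℕ) := (Fin n →₀ ℕ) × (Fin n →₀ ℤ) × Bool
abbrev TF (n : ℕ) := TFIdx n →₀ ℝ

/-- ℓ¹-norm on Taylor–Fourier coefficients. -/
noncomputable def tfNorm {n : ℕ} (g : TF n) : ℝ := g.sum fun _ a => |a|

/-- Evaluation of a Taylor–Fourier polynomial at (p,q). -/
noncomputable def tfEval {n : ℕ} (g : TF n) (p q : Fin n → ℝ) : ℝ :=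
  g.sum fun m a => a * (∏ i, p i ^ m.1 i) *
    (if m.2.2 then Real.cos (∑ i, (m.2.1 i : ℝ) * q i)
     else Real.sin (∑ i, (m.2.1 i : ℝ) * q i))

/-- Formal partial derivative ∂/∂q_i on Taylor–Fourier coefficients. -/
noncomputable def tfDq {n : ℕ} (i : Fin n) (g : TF n) : TF n :=
  g.sum fun m a =>
    if m.2.2 then Finsupp.single (m.1, m.2.1, false) (-(a * (m.2.1 i : ℝ)))
    else Finsupp.single (m.1, m.2.1, true) (a * (m.2.1 i : ℝ))

/-- Degree in the actions p of a monomial index. -/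
def pdeg {n : ℕ} (m : TFIdx n) : ℕ := m.1.sum fun _ e => e

/-- Partial derivative in the action p_i, at the level of functions. -/
noncomputable def pderivP {n : ℕ} (f : (Fin n → ℝ) → (Fin n → ℝ) → ℝ) (i : Fin n)
    (p q : Fin n → ℝ) : ℝ :=
  deriv (fun t => f (Function.update p i t) q) (p i)

/-- Partial derivative in the angle q_i, at the level of functions. -/
noncomputable def pderivQ {n : ℕ} (f : (Fin n → ℝ) → (Fin n → ℝ) → ℝ) (i : Fin n)
    (p q : Fin n → ℝ) : ℝ :=
  deriv (fun t => f p (Function.update q i t)) (q i)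

/-- Poisson-bracket Lie derivative L_χ g = {g, χ}. -/
noncomputable def lieD {n : ℕ} (χ f : (Fin n → ℝ) → (Fin n → ℝ) → ℝ) :
    (Fin n → ℝ) → (Fin n → ℝ) → ℝ :=
  fun p q => ∑ i, (pderivP f i p q * pderivQ χ i p q - pderivQ f i p q * pderivP χ i p q)

section aux
variable {n : ℕ}

noncomputable def trig (b : Bool) (x : ℝ) : ℝ := if b then Real.cos x else Real.sin x

noncomputable def tfBasis (m : TFIdx n) (p q : Fin n → ℝ) : ℝ :=
  (∏ i, p i ^ m.1 i) * trig m.2.2 (∑ i, (m.2.1 i : ℝ) * q i)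

lemma tfEval_eq_sum (g : TF n) {s : Finset (TFIdx n)} (hs : g.support ⊆ s) (p q : Fin n → ℝ) :
    tfEval g p q = ∑ m ∈ s, g m * tfBasis m p q := by
  rw [tfEval, Finsupp.sum_of_support_subset g hs _ (by intro m _; simp)]
  refine Finset.sum_congr rfl fun m _ => ?_
  simp [tfBasis, trig, mul_assoc]

lemma tfNorm_eq_sum (g : TF n) {s : Finset (TFIdx n)} (hs : g.support ⊆ s) :
    tfNorm g = ∑ m ∈ s, |g m| := by
  rw [tfNorm, Finsupp.sum_of_support_subset g hs _ (by intro m _; simp)]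

lemma tfNorm_nonneg (g : TF n) : 0 ≤ tfNorm g := by
  rw [tfNorm_eq_sum g (subset_refl _)]
  exact Finset.sum_nonneg fun m _ => abs_nonneg _

lemma tfNorm_zero : tfNorm (0 : TF n) = 0 := by simp [tfNorm]

lemma tfEval_zero (p q : Fin n → ℝ) : tfEval (0 : TF n) p q = 0 := by simp [tfEval]

lemma tfEval_add (f g : TF n) (p q : Fin n → ℝ) :
    tfEval (f + g) p q = tfEval f p q + tfEval g p q := by
  classical
  rw [tfEval_eq_sum (f+g) (Finsupp.support_add),
    tfEval_eq_sum f (Finset.subset_union_left), tfEval_eq_sum g (Finset.subset_union_right),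
    ← Finset.sum_add_distrib]
  refine Finset.sum_congr rfl fun m _ => ?_
  simp [add_mul]

lemma tfNorm_add_le (f g : TF n) : tfNorm (f + g) ≤ tfNorm f + tfNorm g := by
  classical
  rw [tfNorm_eq_sum (f+g) (Finsupp.support_add),
    tfNorm_eq_sum f (Finset.subset_union_left), tfNorm_eq_sum g (Finset.subset_union_right),
    ← Finset.sum_add_distrib]
  exact Finset.sum_le_sum fun m _ => by simpa using abs_add_le (f m) (g m)

lemma tfEval_single (m : TFIdx n) (a : ℝ) (p q : Fin n → ℝ) :
    tfEval (Finsupp.single m a) p q = a * tfBasis m p q := by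
  classical
  rw [tfEval_eq_sum _ Finsupp.support_single_subset p q, Finset.sum_singleton,
    Finsupp.single_eq_same]

lemma tfNorm_single_le (m : TFIdx n) (a : ℝ) : tfNorm (Finsupp.single m a) ≤ |a| := by
  classical
  rw [tfNorm_eq_sum _ Finsupp.support_single_subset, Finset.sum_singleton,
    Finsupp.single_eq_same]

lemma tfEval_smul (c : ℝ) (g : TF n) (p q : Fin n → ℝ) :
    tfEval (c • g) p q = c * tfEval g p q := by
  classical
  rw [tfEval_eq_sum (c • g) (Finsupp.support_smul), tfEval_eq_sum g (subset_refl _),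
    Finset.mul_sum]
  refine Finset.sum_congr rfl fun m _ => ?_
  simp [mul_assoc]

lemma tfNorm_smul_le (c : ℝ) (g : TF n) : tfNorm (c • g) ≤ |c| * tfNorm g := by
  classical
  rw [tfNorm_eq_sum (c • g) (Finsupp.support_smul), tfNorm_eq_sum g (subset_refl _),
    Finset.mul_sum]
  refine Finset.sum_le_sum fun m _ => ?_
  simp [abs_mul]

lemma tfEval_finsetSum {α : Type*} (s : Finset α) (f : α → TF n) (p q : Fin n → ℝ) :
    tfEval (∑ x ∈ s, f x) p q = ∑ x ∈ s, tfEval (f x) p q := by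
  classical
  induction s using Finset.induction with
  | empty => simp [tfEval_zero]
  | insert a s' hx ih => simp [Finset.sum_insert hx, tfEval_add, ih]

lemma tfNorm_finsetSum_le {α : Type*} (s : Finset α) (f : α → TF n) :
    tfNorm (∑ x ∈ s, f x) ≤ ∑ x ∈ s, tfNorm (f x) := by
  classical
  induction s using Finset.induction with
  | empty => simp [tfNorm_zero]
  | insert a s' hx ih =>
    rw [Finset.sum_insert hx, Finset.sum_insert hx]
    exact le_trans (tfNorm_add_le _ _) (by linarith)

lemma tfEval_finsuppSum (g : TF n) (F : TFIdx n → ℝ → TF n) (p q : Fin n → ℝ) :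
    tfEval (g.sum F) p q = ∑ m ∈ g.support, tfEval (F m (g m)) p q :=
  tfEval_finsetSum _ _ p q

lemma tfNorm_finsuppSum_le (g : TF n) (F : TFIdx n → ℝ → TF n) :
    tfNorm (g.sum F) ≤ ∑ m ∈ g.support, tfNorm (F m (g m)) :=
  tfNorm_finsetSum_le _ _

end aux

section deriv
variable {n : ℕ}

noncomputable def tfDp (i : Fin n) (g : TF n) : TF n :=
  g.sum fun m a => Finsupp.single (m.1.update i (m.1 i - 1), m.2) (a * (m.1 i : ℝ))

lemma prod_update_pow (p : Fin n → ℝ) (μ : Fin n →₀ ℕ) (i : Fin n) (t : ℝ) :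
    (∏ x, Function.update p i t x ^ μ x) = t ^ μ i * ∏ x ∈ Finset.univ.erase i, p x ^ μ x := by
  classical
  have h : (fun x => Function.update p i t x ^ μ x)
      = Function.update (fun x => p x ^ μ x) i (t ^ μ i) := by
    funext x
    by_cases hx : x = i
    · subst hx; simp
    · simp [Function.update_of_ne hx]
  rw [h, Finset.prod_update_of_mem (Finset.mem_univ i), Finset.erase_eq]

lemma prod_pow_update (p : Fin n → ℝ) (μ : Fin n →₀ ℕ) (i : Fin n) (v : ℕ) :
    (∏ x, p x ^ (μ.update i v) x) = p i ^ v * ∏ x ∈ Finset.univ.erase i, p x ^ μ x := by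
  classical
  have h : (fun x => p x ^ (μ.update i v) x)
      = Function.update (fun x => p x ^ μ x) i (p i ^ v) := by
    funext x
    by_cases hx : x = i
    · subst hx; simp
    · simp only [Finsupp.coe_update]
      rw [Function.update_of_ne hx, Function.update_of_ne hx]
  rw [h, Finset.prod_update_of_mem (Finset.mem_univ i), Finset.erase_eq]

lemma sum_update_linear (q : Fin n → ℝ) (k : Fin n →₀ ℤ) (i : Fin n) (t : ℝ) :
    (∑ x, (k x : ℝ) * Function.update q i t x)
      = (k i : ℝ) * t + ∑ x ∈ Finset.univ.erase i, (k x : ℝ) * q x := by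
  classical
  have h : (fun x => (k x : ℝ) * Function.update q i t x)
      = Function.update (fun x => (k x : ℝ) * q x) i ((k i : ℝ) * t) := by
    funext x
    by_cases hx : x = i
    · subst hx; simp
    · simp [Function.update_of_ne hx]
  rw [h, Finset.sum_update_of_mem (Finset.mem_univ i), Finset.erase_eq]

lemma hasDerivAt_tfEval_p (g : TF n) (i : Fin n) (p q : Fin n → ℝ) :
    HasDerivAt (fun t => tfEval g (Function.update p i t) q) (tfEval (tfDp i g) p q) (p i) := by
  classical
  have hfun : (fun t => tfEval g (Function.update p i t) q)
      = fun t => ∑ m ∈ g.support,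
          g m * ((t ^ m.1 i * ∏ x ∈ Finset.univ.erase i, p x ^ m.1 x)
            * trig m.2.2 (∑ x, (m.2.1 x : ℝ) * q x)) := by
    funext t
    rw [tfEval_eq_sum g (subset_refl _)]
    refine Finset.sum_congr rfl fun m _ => ?_
    rw [tfBasis, prod_update_pow, mul_assoc]
  have hval : tfEval (tfDp i g) p q
      = ∑ m ∈ g.support,
          g m * ((m.1 i : ℝ) * ((p i) ^ (m.1 i - 1) * ∏ x ∈ Finset.univ.erase i, p x ^ m.1 x)
            * trig m.2.2 (∑ x, (m.2.1 x : ℝ) * q x)) := by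
    rw [tfDp, tfEval_finsuppSum]
    refine Finset.sum_congr rfl fun m _ => ?_
    rw [tfEval_single, tfBasis, prod_pow_update]
    ring
  rw [hfun, hval]
  refine HasDerivAt.fun_sum fun m _ => ?_
  have h1 : HasDerivAt (fun t : ℝ => t ^ m.1 i) ((m.1 i : ℝ) * p i ^ (m.1 i - 1)) (p i) :=
    hasDerivAt_pow _ _
  have h2 := (h1.mul_const (∏ x ∈ Finset.univ.erase i, p x ^ m.1 x)).mul_const
      (trig m.2.2 (∑ x, (m.2.1 x : ℝ) * q x))
  have h3 := h2.const_mul (g m)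
  exact h3.congr_deriv (by ring)

lemma hasDerivAt_tfEval_q (g : TF n) (i : Fin n) (p q : Fin n → ℝ) :
    HasDerivAt (fun t => tfEval g p (Function.update q i t)) (tfEval (tfDq i g) p q) (q i) := by
  classical
  have hfun : (fun t => tfEval g p (Function.update q i t))
      = fun t => ∑ m ∈ g.support,
          g m * ((∏ x, p x ^ m.1 x)
            * trig m.2.2 ((m.2.1 i : ℝ) * t + ∑ x ∈ Finset.univ.erase i, (m.2.1 x : ℝ) * q x)) := by
    funext t
    rw [tfEval_eq_sum g (subset_refl _)]
    refine Finset.sum_congr rfl fun m _ => ?_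
    rw [tfBasis, sum_update_linear]
  have hq : ∀ k : Fin n →₀ ℤ, (∑ x, (k x : ℝ) * q x)
      = (k i : ℝ) * q i + ∑ x ∈ Finset.univ.erase i, (k x : ℝ) * q x := by
    intro k
    have := sum_update_linear q k i (q i)
    simpa [Function.update_eq_self] using this
  have hval : tfEval (tfDq i g) p q
      = ∑ m ∈ g.support,
          g m * ((∏ x, p x ^ m.1 x)
            * ((if m.2.2 then -Real.sin (∑ x, (m.2.1 x : ℝ) * q x)
                else Real.cos (∑ x, (m.2.1 x : ℝ) * q x)) * (m.2.1 i : ℝ))) := by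
    rw [tfDq, tfEval_finsuppSum]
    refine Finset.sum_congr rfl fun m _ => ?_
    obtain ⟨μ, k, b⟩ := m
    cases b
    · rw [if_neg (by simp), tfEval_single, tfBasis]
      simp only [trig]
      norm_num
      ring
    · rw [if_pos rfl, tfEval_single, tfBasis]
      simp only [trig]
      norm_num
      ring
  rw [hfun, hval]
  refine HasDerivAt.fun_sum fun m _ => ?_
  set c := ∑ x ∈ Finset.univ.erase i, (m.2.1 x : ℝ) * q x with hc
  have hlin : HasDerivAt (fun t : ℝ => (m.2.1 i : ℝ) * t + c) ((m.2.1 i : ℝ)) (q i) := by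
    simpa using ((hasDerivAt_id (q i)).const_mul ((m.2.1 i : ℝ))).add_const c
  have htrig : HasDerivAt (fun t : ℝ => trig m.2.2 ((m.2.1 i : ℝ) * t + c))
      ((if m.2.2 then -Real.sin ((m.2.1 i : ℝ) * q i + c)
        else Real.cos ((m.2.1 i : ℝ) * q i + c)) * (m.2.1 i : ℝ)) (q i) := by
    by_cases hb : m.2.2
    · simp only [trig, if_pos hb]
      exact (Real.hasDerivAt_cos _).comp _ hlin
    · simp only [trig, if_neg hb]
      exact (Real.hasDerivAt_sin _).comp _ hlin
  have h2 := (htrig.const_mul (∏ x, p x ^ m.1 x)).const_mul (g m)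
  rw [hq m.2.1]
  exact h2

lemma pderivP_tfEval (g : TF n) (i : Fin n) (p q : Fin n → ℝ) :
    pderivP (tfEval g) i p q = tfEval (tfDp i g) p q :=
  (hasDerivAt_tfEval_p g i p q).deriv

lemma pderivQ_tfEval (g : TF n) (i : Fin n) (p q : Fin n → ℝ) :
    pderivQ (tfEval g) i p q = tfEval (tfDq i g) p q :=
  (hasDerivAt_tfEval_q g i p q).deriv

end deriv

section mul
variable {n : ℕ}

/-- Multiply `g` by the p-free harmonic `c · trig b (k·q)`. -/
noncomputable def mulHarm (k : Fin n →₀ ℤ) (b : Bool) (c : ℝ) (g : TF n) : TF n :=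
  g.sum fun m a =>
    match b, m.2.2 with
    | true,  true  => Finsupp.single (m.1, k + m.2.1, true) (c * a / 2)
        + Finsupp.single (m.1, k - m.2.1, true) (c * a / 2)
    | true,  false => Finsupp.single (m.1, k + m.2.1, false) (c * a / 2)
        + Finsupp.single (m.1, k - m.2.1, false) (-(c * a / 2))
    | false, true  => Finsupp.single (m.1, k + m.2.1, false) (c * a / 2)
        + Finsupp.single (m.1, k - m.2.1, false) (c * a / 2)
    | false, false => Finsupp.single (m.1, k - m.2.1, true) (c * a / 2)
        + Finsupp.single (m.1, k + m.2.1, true) (-(c * a / 2))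

lemma sum_add_harm (k k' : Fin n →₀ ℤ) (q : Fin n → ℝ) :
    (∑ x, ((k + k') x : ℝ) * q x) = (∑ x, (k x : ℝ) * q x) + ∑ x, (k' x : ℝ) * q x := by
  rw [← Finset.sum_add_distrib]
  refine Finset.sum_congr rfl fun x _ => ?_
  push_cast [Finsupp.add_apply]
  ring

lemma sum_sub_harm (k k' : Fin n →₀ ℤ) (q : Fin n → ℝ) :
    (∑ x, ((k - k') x : ℝ) * q x) = (∑ x, (k x : ℝ) * q x) - ∑ x, (k' x : ℝ) * q x := by
  rw [← Finset.sum_sub_distrib]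
  refine Finset.sum_congr rfl fun x _ => ?_
  push_cast [Finsupp.sub_apply]
  ring

lemma tfEval_mulHarm (k : Fin n →₀ ℤ) (b : Bool) (c : ℝ) (g : TF n) (p q : Fin n → ℝ) :
    tfEval (mulHarm k b c g) p q
      = c * trig b (∑ x, (k x : ℝ) * q x) * tfEval g p q := by
  classical
  rw [mulHarm, tfEval_finsuppSum, tfEval_eq_sum g (subset_refl _), Finset.mul_sum]
  refine Finset.sum_congr rfl fun m _ => ?_
  obtain ⟨μ, k', b'⟩ := m
  set A := ∑ x, (k x : ℝ) * q x
  set B := ∑ x, (k' x : ℝ) * q x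
  cases b <;> cases b' <;>
    · simp only [tfEval_add, tfEval_single, tfBasis, trig, sum_add_harm, sum_sub_harm]
      norm_num [Real.cos_add, Real.cos_sub, Real.sin_add, Real.sin_sub]
      ring

lemma tfNorm_mulHarm_le (k : Fin n →₀ ℤ) (b : Bool) (c : ℝ) (g : TF n) :
    tfNorm (mulHarm k b c g) ≤ |c| * tfNorm g := by
  classical
  refine le_trans (tfNorm_finsuppSum_le _ _) ?_
  rw [tfNorm_eq_sum g (subset_refl _), Finset.mul_sum]
  refine Finset.sum_le_sum fun m _ => ?_
  have habs : |c * g m / 2| + |c * g m / 2| = |c| * |g m| := by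
    rw [abs_div, abs_mul]
    norm_num
  obtain ⟨μ, k', b'⟩ := m
  cases b <;> cases b' <;>
    · refine le_trans (tfNorm_add_le _ _) ?_
      refine le_trans (add_le_add (tfNorm_single_le _ _) (tfNorm_single_le _ _)) ?_
      try rw [abs_neg]
      rw [habs]

/-- Multiply by a p-free polynomial. -/
noncomputable def mulFree (Y g : TF n) : TF n :=
  Y.sum fun m c => mulHarm m.2.1 m.2.2 c g

lemma tfEval_mulFree (Y g : TF n) (hY : ∀ m ∈ Y.support, m.1 = 0) (p q : Fin n → ℝ) :
    tfEval (mulFree Y g) p q = tfEval Y p q * tfEval g p q := by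
  classical
  rw [mulFree, tfEval_finsuppSum, tfEval_eq_sum Y (subset_refl _), Finset.sum_mul]
  refine Finset.sum_congr rfl fun m hm => ?_
  rw [tfEval_mulHarm, tfBasis, hY m hm]
  simp [mul_assoc]

lemma tfNorm_mulFree_le (Y g : TF n) : tfNorm (mulFree Y g) ≤ tfNorm Y * tfNorm g := by
  classical
  refine le_trans (tfNorm_finsuppSum_le _ _) ?_
  rw [tfNorm_eq_sum Y (subset_refl _), Finset.sum_mul]
  exact Finset.sum_le_sum fun m _ => tfNorm_mulHarm_le _ _ _ _

end mul

section lie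
variable {n : ℕ}

lemma tfEval_pfree (X : TF n) (hX : ∀ m ∈ X.support, m.1 = 0) (p p' q : Fin n → ℝ) :
    tfEval X p q = tfEval X p' q := by
  rw [tfEval_eq_sum X (subset_refl _), tfEval_eq_sum X (subset_refl _)]
  refine Finset.sum_congr rfl fun m hm => ?_
  rw [tfBasis, tfBasis, hX m hm]
  simp

/-- The generating function χ. -/
noncomputable def chiFun (X : TF n) (ξ : Fin n → ℝ) : (Fin n → ℝ) → (Fin n → ℝ) → ℝ :=
  fun p q => tfEval X p q + ∑ i, ξ i * q i

lemma pderivP_chi (X : TF n) (hX : ∀ m ∈ X.support, m.1 = 0) (ξ : Fin n → ℝ) (i : Fin n)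
    (p q : Fin n → ℝ) : pderivP (chiFun X ξ) i p q = 0 := by
  have h : (fun t => chiFun X ξ (Function.update p i t) q) = fun _ => chiFun X ξ p q := by
    funext t
    simp only [chiFun]
    rw [tfEval_pfree X hX (Function.update p i t) p q]
  rw [pderivP, h, deriv_const]

lemma pderivQ_chi (X : TF n) (hX : ∀ m ∈ X.support, m.1 = 0) (ξ : Fin n → ℝ) (i : Fin n)
    (p q : Fin n → ℝ) :
    pderivQ (chiFun X ξ) i p q = tfEval (tfDq i X) p q + ξ i := by
  classical
  have hlin : HasDerivAt (fun t => ∑ x, ξ x * Function.update q i t x) (ξ i) (q i) := by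
    have h : (fun t => ∑ x, ξ x * Function.update q i t x)
        = fun t => ξ i * t + ∑ x ∈ Finset.univ.erase i, ξ x * q x := by
      funext t
      have h2 : (fun x => ξ x * Function.update q i t x)
          = Function.update (fun x => ξ x * q x) i (ξ i * t) := by
        funext x
        by_cases hx : x = i
        · subst hx; simp
        · simp [Function.update_of_ne hx]
      rw [h2, Finset.sum_update_of_mem (Finset.mem_univ i), Finset.erase_eq]
    rw [h]
    simpa using ((hasDerivAt_id (q i)).const_mul (ξ i)).add_const (∑ x ∈ Finset.univ.erase i, ξ x * q x)
  exact (((hasDerivAt_tfEval_q X i p q).add hlin)).deriv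

/-- The formal Lie operator. -/
noncomputable def lop (X : TF n) (ξ : Fin n → ℝ) (g : TF n) : TF n :=
  ∑ i, (mulFree (tfDq i X) (tfDp i g) + ξ i • tfDp i g)

lemma support_tfDq_pfree (X : TF n) (hX : ∀ m ∈ X.support, m.1 = 0) (i : Fin n) :
    ∀ m ∈ (tfDq i X).support, m.1 = 0 := by
  classical
  intro m hm
  have := Finsupp.support_sum hm
  obtain ⟨m₀, hm₀, hmem⟩ := Finset.mem_biUnion.1 this
  by_cases hb : m₀.2.2
  · rw [if_pos hb] at hmem
    have := Finsupp.support_single_subset hmem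
    simp only [Finset.mem_singleton] at this
    rw [this]
    exact hX m₀ hm₀
  · rw [if_neg hb] at hmem
    have := Finsupp.support_single_subset hmem
    simp only [Finset.mem_singleton] at this
    rw [this]
    exact hX m₀ hm₀

lemma lieD_tfEval (X : TF n) (hX : ∀ m ∈ X.support, m.1 = 0) (ξ : Fin n → ℝ) (g : TF n) :
    lieD (chiFun X ξ) (tfEval g) = tfEval (lop X ξ g) := by
  funext p q
  rw [lieD, lop, tfEval_finsetSum]
  refine Finset.sum_congr rfl fun i _ => ?_
  rw [pderivP_tfEval, pderivQ_tfEval, pderivP_chi X hX, pderivQ_chi X hX,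
    tfEval_add, tfEval_mulFree _ _ (support_tfDq_pfree X hX i), tfEval_smul]
  ring

end lie

section invariants
variable {n : ℕ}

lemma pdeg_eq (m : TFIdx n) : pdeg m = ∑ i, m.1 i := by
  rw [pdeg, Finsupp.sum_fintype]
  intro i; rfl

lemma support_tfDp (g : TF n) (i : Fin n) :
    ∀ m ∈ (tfDp i g).support, ∃ m₀ ∈ g.support,
      m₀.1 i ≠ 0 ∧ m = (m₀.1.update i (m₀.1 i - 1), m₀.2) := by
  classical
  intro m hm
  obtain ⟨m₀, hm₀, hmem⟩ := Finset.mem_biUnion.1 (Finsupp.support_sum hm)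
  refine ⟨m₀, hm₀, ?_, ?_⟩
  · have h := Finsupp.single_apply_ne_zero.1 (Finsupp.mem_support_iff.1 hmem)
    intro h0
    exact h.2 (by rw [h0]; simp)
  · exact (Finsupp.single_apply_ne_zero.1 (Finsupp.mem_support_iff.1 hmem)).1

lemma pdeg_update (μ : Fin n →₀ ℕ) (k : (Fin n →₀ ℤ) × Bool) (i : Fin n) (hμ : μ i ≠ 0) :
    pdeg ((μ.update i (μ i - 1), k) : TFIdx n) = pdeg ((μ, k) : TFIdx n) - 1 := by
  classical
  rw [pdeg_eq, pdeg_eq]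
  simp only
  rw [← Finset.add_sum_erase _ _ (Finset.mem_univ i), ← Finset.add_sum_erase _ μ (Finset.mem_univ i)]
  have h : ∑ x ∈ Finset.univ.erase i, (μ.update i (μ i - 1)) x
      = ∑ x ∈ Finset.univ.erase i, μ x := by
    refine Finset.sum_congr rfl fun x hx => ?_
    have hx' : x ≠ i := (Finset.mem_erase.1 hx).1
    simp only [Finsupp.coe_update]
    rw [Function.update_of_ne hx']
  rw [h]
  simp only [Finsupp.coe_update, Function.update_self]
  omega

lemma support_mulHarm (k : Fin n →₀ ℤ) (b : Bool) (c : ℝ) (h : TF n) :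
    ∀ m ∈ (mulHarm k b c h).support, ∃ m₀ ∈ h.support, m.1 = m₀.1 := by
  classical
  intro m hm
  obtain ⟨m₀, hm₀, hmem⟩ := Finset.mem_biUnion.1 (Finsupp.support_sum hm)
  refine ⟨m₀, hm₀, ?_⟩
  obtain ⟨μ, k', b'⟩ := m₀
  have hsub : ∀ (x y : TFIdx n) (v w : ℝ), m ∈ (Finsupp.single x v + Finsupp.single y w).support →
      m = x ∨ m = y := by
    intro x y v w hmem'
    have := Finsupp.support_add hmem'
    rcases Finset.mem_union.1 this with h' | h'
    · exact Or.inl (Finset.mem_singleton.1 (Finsupp.support_single_subset h'))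
    · exact Or.inr (Finset.mem_singleton.1 (Finsupp.support_single_subset h'))
  cases b <;> cases b' <;>
    · rcases hsub _ _ _ _ hmem with h' | h' <;> (rw [h'])

lemma support_mulFree (Y h : TF n) :
    ∀ m ∈ (mulFree Y h).support, ∃ m₀ ∈ h.support, m.1 = m₀.1 := by
  classical
  intro m hm
  obtain ⟨mY, _, hmem⟩ := Finset.mem_biUnion.1 (Finsupp.support_sum hm)
  exact support_mulHarm _ _ _ h m hmem

lemma support_lop (X : TF n) (ξ : Fin n → ℝ) (g : TF n) (d : ℕ)
    (hg : ∀ m ∈ g.support, pdeg m = d) :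
    ∀ m ∈ (lop X ξ g).support, pdeg m = d - 1 := by
  classical
  intro m hm
  have hDp : ∀ i : Fin n, ∀ m' ∈ (tfDp i g).support, pdeg m' = d - 1 := by
    intro i m' hm'
    obtain ⟨m₀, hm₀, hne, heq⟩ := support_tfDp g i m' hm'
    have : pdeg m₀ = d := hg m₀ hm₀
    rw [heq]
    have := pdeg_update m₀.1 m₀.2 i hne
    rw [this]
    rw [show ((m₀.1, m₀.2) : TFIdx n) = m₀ from rfl, hg m₀ hm₀]
  obtain ⟨i, _, hmem⟩ := Finset.mem_biUnion.1 (Finsupp.support_finset_sum hm)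
  rcases Finset.mem_union.1 (Finsupp.support_add hmem) with h' | h'
  · obtain ⟨m₀, hm₀, hfst⟩ := support_mulFree _ _ m h'
    have h1 := hDp i m₀ hm₀
    rw [pdeg_eq] at h1 ⊢
    rw [show m.1 = m₀.1 from hfst]
    exact h1
  · exact hDp i m (Finsupp.support_smul h')

lemma sum_tfNorm_tfDp_le (g : TF n) (d : ℕ) (hg : ∀ m ∈ g.support, pdeg m = d) :
    ∑ i, tfNorm (tfDp i g) ≤ (d : ℝ) * tfNorm g := by
  classical
  have h1 : ∀ i, tfNorm (tfDp i g) ≤ ∑ m ∈ g.support, |g m| * (m.1 i : ℝ) := by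
    intro i
    refine le_trans (tfNorm_finsuppSum_le _ _) (Finset.sum_le_sum fun m _ => ?_)
    refine le_trans (tfNorm_single_le _ _) ?_
    rw [abs_mul, Nat.abs_cast]
  refine le_trans (Finset.sum_le_sum fun i _ => h1 i) ?_
  rw [Finset.sum_comm]
  rw [tfNorm_eq_sum g (subset_refl _), Finset.mul_sum]
  refine le_of_eq (Finset.sum_congr rfl fun m hm => ?_)
  rw [← Finset.mul_sum]
  rw [show ∑ i, (m.1 i : ℝ) = ((∑ i, m.1 i : ℕ) : ℝ) by push_cast; rfl]
  rw [← pdeg_eq, hg m hm]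
  ring

lemma tfNorm_lop_le (X : TF n) (ξ : Fin n → ℝ) (g : TF n) (d : ℕ)
    (hg : ∀ m ∈ g.support, pdeg m = d)
    (G Ξ : ℝ) (hG : ∀ i, tfNorm (tfDq i X) ≤ G) (hΞ : ∀ i, |ξ i| ≤ Ξ)
    (hGΞ : 0 ≤ G + Ξ) :
    tfNorm (lop X ξ g) ≤ (G + Ξ) * ((d : ℝ) * tfNorm g) := by
  classical
  refine le_trans (tfNorm_finsetSum_le _ _) ?_
  have h1 : ∀ i : Fin n, tfNorm (mulFree (tfDq i X) (tfDp i g) + ξ i • tfDp i g)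
      ≤ (G + Ξ) * tfNorm (tfDp i g) := by
    intro i
    refine le_trans (tfNorm_add_le _ _) ?_
    have ha : tfNorm (mulFree (tfDq i X) (tfDp i g)) ≤ G * tfNorm (tfDp i g) :=
      le_trans (tfNorm_mulFree_le _ _)
        (mul_le_mul_of_nonneg_right (hG i) (tfNorm_nonneg _))
    have hb : tfNorm (ξ i • tfDp i g) ≤ Ξ * tfNorm (tfDp i g) :=
      le_trans (tfNorm_smul_le _ _)
        (mul_le_mul_of_nonneg_right (hΞ i) (tfNorm_nonneg _))
    rw [add_mul]
    exact add_le_add ha hb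
  refine le_trans (Finset.sum_le_sum fun i _ => h1 i) ?_
  rw [← Finset.mul_sum]
  exact mul_le_mul_of_nonneg_left (sum_tfNorm_tfDp_le g d hg) hGΞ

lemma tfDp_eq_zero_of_pdeg_zero (g : TF n) (hg : ∀ m ∈ g.support, pdeg m = 0) (i : Fin n) :
    tfDp i g = 0 := by
  classical
  rw [tfDp]
  refine Finset.sum_eq_zero fun m hm => ?_
  have h0 : m.1 i = 0 := by
    have := hg m hm
    rw [pdeg_eq] at this
    exact (Finset.sum_eq_zero_iff.1 this) i (Finset.mem_univ i)
  simp [h0]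

lemma mulHarm_zero (k : Fin n →₀ ℤ) (b : Bool) (c : ℝ) : mulHarm k b c (0 : TF n) = 0 := by
  rw [mulHarm, Finsupp.sum_zero_index]

lemma mulFree_zero (Y : TF n) : mulFree Y (0 : TF n) = 0 := by
  rw [mulFree]
  refine Finset.sum_eq_zero fun m _ => mulHarm_zero _ _ _

lemma lop_of_pdeg_zero (X : TF n) (ξ : Fin n → ℝ) (g : TF n)
    (hg : ∀ m ∈ g.support, pdeg m = 0) : lop X ξ g = 0 := by
  rw [lop]
  refine Finset.sum_eq_zero fun i _ => ?_
  rw [tfDp_eq_zero_of_pdeg_zero g hg i, mulFree_zero, smul_zero, add_zero]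

lemma lop_zero (X : TF n) (ξ : Fin n → ℝ) : lop X ξ (0 : TF n) = 0 :=
  lop_of_pdeg_zero X ξ 0 (by simp)

end invariants

section main
variable {n : ℕ}

lemma lieD_iterate (X : TF n) (hX : ∀ m ∈ X.support, m.1 = 0) (ξ : Fin n → ℝ)
    (g : TF n) (j : ℕ) :
    (lieD (chiFun X ξ))^[j] (tfEval g) = tfEval ((lop X ξ)^[j] g) := by
  induction j with
  | zero => rfl
  | succ j ih =>
    rw [Function.iterate_succ_apply', ih, lieD_tfEval X hX ξ, Function.iterate_succ_apply']

lemma support_lop_iter (X : TF n) (ξ : Fin n → ℝ) (g : TF n) (ℓ : ℕ)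
    (hg : ∀ m ∈ g.support, pdeg m = ℓ) :
    ∀ j, ∀ m ∈ ((lop X ξ)^[j] g).support, pdeg m = ℓ - j := by
  intro j
  induction j with
  | zero => simpa using hg
  | succ j ih =>
    intro m hm
    rw [Function.iterate_succ_apply'] at hm
    have := support_lop X ξ _ (ℓ - j) ih m hm
    omega

lemma lop_iter_eq_zero (X : TF n) (ξ : Fin n → ℝ) (g : TF n) (ℓ : ℕ)
    (hg : ∀ m ∈ g.support, pdeg m = ℓ) :
    ∀ j, ℓ < j → (lop X ξ)^[j] g = 0 := by
  intro j hj
  induction j with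
  | zero => omega
  | succ k ih =>
    rw [Function.iterate_succ_apply']
    rcases Nat.lt_or_ge ℓ k with h | h
    · rw [ih h, lop_zero]
    · have h0 : ∀ m ∈ ((lop X ξ)^[k] g).support, pdeg m = 0 := by
        intro m hm
        have := support_lop_iter X ξ g ℓ hg k m hm
        omega
      exact lop_of_pdeg_zero _ _ _ h0

lemma tfNorm_lop_iter_le (X : TF n) (ξ : Fin n → ℝ) (g : TF n) (ℓ : ℕ)
    (hg : ∀ m ∈ g.support, pdeg m = ℓ)
    (G Ξ : ℝ) (hG : ∀ i, tfNorm (tfDq i X) ≤ G) (hΞ : ∀ i, |ξ i| ≤ Ξ)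
    (hGΞ : 0 ≤ G + Ξ) :
    ∀ j, tfNorm ((lop X ξ)^[j] g)
      ≤ (ℓ.descFactorial j : ℝ) * (G + Ξ) ^ j * tfNorm g := by
  intro j
  induction j with
  | zero => simp
  | succ j ih =>
    rw [Function.iterate_succ_apply']
    calc tfNorm (lop X ξ ((lop X ξ)^[j] g))
        ≤ (G + Ξ) * (((ℓ - j : ℕ) : ℝ) * tfNorm ((lop X ξ)^[j] g)) :=
          tfNorm_lop_le X ξ _ (ℓ - j) (support_lop_iter X ξ g ℓ hg j) G Ξ hG hΞ hGΞ
      _ ≤ (G + Ξ) * (((ℓ - j : ℕ) : ℝ) * ((ℓ.descFactorial j : ℝ) * (G + Ξ) ^ j * tfNorm g)) := by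
          refine mul_le_mul_of_nonneg_left (mul_le_mul_of_nonneg_left ih (by positivity)) hGΞ
      _ = (ℓ.descFactorial (j+1) : ℝ) * (G + Ξ) ^ (j+1) * tfNorm g := by
          rw [Nat.descFactorial_succ]
          push_cast
          ring

theorem lie_series_estimate_translation' {n : ℕ} (ℓ : ℕ) (g X : TF n) (ξ : Fin n → ℝ)
    (hg : ∀ m ∈ g.support, pdeg m = ℓ)
    (hX : ∀ m ∈ X.support, m.1 = 0)
    (G Ξ : ℝ)
    (hG : ∀ i, tfNorm (tfDq i X) ≤ G)
    (hΞ : ∀ i, |ξ i| ≤ Ξ) :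
    (∀ j : ℕ, 1 ≤ j → j ≤ ℓ →
      ∃ h : TF n,
        (∀ p q : Fin n → ℝ,
          tfEval h p q = (j.factorial : ℝ)⁻¹ *
            (lieD (fun p q => tfEval X p q + ∑ i, ξ i * q i))^[j] (tfEval g) p q) ∧
        tfNorm h ≤ (ℓ.choose j : ℝ) * (G + Ξ) ^ j * tfNorm g) ∧
    (∀ j : ℕ, ℓ < j →
      (lieD (fun p q => tfEval X p q + ∑ i, ξ i * q i))^[j] (tfEval g) = fun _ _ => 0) := by
  have hchi : (fun (p q : Fin n → ℝ) => tfEval X p q + ∑ i, ξ i * q i) = chiFun X ξ := rfl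
  constructor
  · intro j hj1 hjℓ
    rcases Nat.eq_zero_or_pos n with hn | hn
    · -- n = 0 : g must vanish
      subst hn
      have hg0 : g = 0 := by
        rcases Finset.eq_empty_or_nonempty g.support with he | ⟨m, hm⟩
        · exact Finsupp.support_eq_empty.1 he
        · exfalso
          have h1 := hg m hm
          have h2 : m.1 = 0 := Subsingleton.elim _ _
          rw [pdeg, h2] at h1
          simp at h1
          omega
      subst hg0
      refine ⟨0, fun p q => ?_, ?_⟩
      · rw [hchi, lieD_iterate X hX ξ 0 j,
          Function.iterate_fixed (lop_zero X ξ) j, tfEval_zero, mul_zero]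
      · rw [tfNorm_zero, mul_zero]
    · have hGΞ : 0 ≤ G + Ξ := by
        have h1 := hG ⟨0, hn⟩
        have h2 := hΞ ⟨0, hn⟩
        have h3 := tfNorm_nonneg (tfDq ⟨0, hn⟩ X)
        have h4 := abs_nonneg (ξ ⟨0, hn⟩)
        linarith
      refine ⟨(j.factorial : ℝ)⁻¹ • (lop X ξ)^[j] g, fun p q => ?_, ?_⟩
      · rw [hchi, lieD_iterate X hX ξ g j, tfEval_smul]
      · have hfact : (0:ℝ) ≤ (j.factorial : ℝ)⁻¹ := by positivity
        calc tfNorm ((j.factorial : ℝ)⁻¹ • (lop X ξ)^[j] g)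
            ≤ |(j.factorial : ℝ)⁻¹| * tfNorm ((lop X ξ)^[j] g) := tfNorm_smul_le _ _
          _ ≤ (j.factorial : ℝ)⁻¹ * ((ℓ.descFactorial j : ℝ) * (G + Ξ) ^ j * tfNorm g) := by
              rw [abs_of_nonneg hfact]
              exact mul_le_mul_of_nonneg_left
                (tfNorm_lop_iter_le X ξ g ℓ hg G Ξ hG hΞ hGΞ j) hfact
          _ = (ℓ.choose j : ℝ) * (G + Ξ) ^ j * tfNorm g := by
              rw [Nat.descFactorial_eq_factorial_mul_choose]
              have hne : (j.factorial : ℝ) ≠ 0 := by positivity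
              push_cast
              field_simp
  · intro j hj
    rw [hchi, lieD_iterate X hX ξ g j, lop_iter_eq_zero X ξ g ℓ hg j hj]
    funext p q
    exact tfEval_zero p q

end main

/-- Lie-series estimates for the generating function χ(q) = X(q) + ξ·q:
‖(1/j!) L_χ^j g‖ ≤ C(ℓ,j) (max_i ‖∂X/∂q_i‖ + max_i |ξ_i|)^j ‖g‖ for 1 ≤ j ≤ ℓ,
and L_χ^j g = 0 for j > ℓ. -/
theorem lie_series_estimate_translation {n : ℕ} (ℓ : ℕ) (g X : TF n) (ξ : Fin n → ℝ)
    (hg : ∀ m ∈ g.support, pdeg m = ℓ)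
    (hX : ∀ m ∈ X.support, m.1 = 0)
    (G Ξ : ℝ)
    (hG : ∀ i, tfNorm (tfDq i X) ≤ G)
    (hΞ : ∀ i, |ξ i| ≤ Ξ) :
    (∀ j : ℕ, 1 ≤ j → j ≤ ℓ →
      ∃ h : TF n,
        (∀ p q : Fin n → ℝ,
          tfEval h p q = (j.factorial : ℝ)⁻¹ *
            (lieD (fun p q => tfEval X p q + ∑ i, ξ i * q i))^[j] (tfEval g) p q) ∧
        tfNorm h ≤ (ℓ.choose j : ℝ) * (G + Ξ) ^ j * tfNorm g) ∧
    (∀ j : ℕ, ℓ < j →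
      (lieD (fun p q => tfEval X p q + ∑ i, ξ i * q i))^[j] (tfEval g) = fun _ _ => 0) := 
  lie_series_estimate_translation' ℓ g X ξ hg hX G Ξ hG hΞ
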